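/- Let S be a semigroup generated by a subset A ⊆ S, let T be a subsemigroup of S, fix a transversal {h_i : i ∈ I} of the ℋ^T-classes contained in S \ T with the convention h_1 = 1 ∈ S^1 and I^1 = I ∪ {1}, and fix functions ρ, λ : (indices) and σ : S^1 × I^1 → T^1, τ : I^1 × S^1 → T^1 satisfying s h_i = h_{ρ(s,i)} σ(s,i) and h_i s = τ(i,s) h_{λ(i,s)} for all s ∈ S^1, i ∈ I^1 (where ρ(s,i) = j if s h_i ∈ H_j and ρ(s,i) = 1 if s h_i ∈ T^1, and dually for λ). Then T is generated by the set B = {τ(i, σ(a,j)) : i, j ∈ I^1, a ∈ A} ∩ T, i.e. every element of T is a product of elements of this set. In particular, if S is finitely generated and T has finite Green index in S, then T is finitely generated. -/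

import Mathlib

namespace GreenIndexPaper

variable {S : Type*} [Semigroup S]

/-- The subset `u·T¹ = {u} ∪ uT` of `S` (equivalently, `u T¹` computed in `S¹`). -/
def rset (T : Subsemigroup S) (u : S) : Set S := insert u {x | ∃ t ∈ T, x = u * t}

/-- The subset `T¹·u = {u} ∪ Tu` of `S`. -/
def lset (T : Subsemigroup S) (u : S) : Set S := insert u {x | ∃ t ∈ T, x = t * u}

/-- The relative Green relation `ℛ^T`. -/
def RrelT (T : Subsemigroup S) (u v : S) : Prop := rset T u = rset T v

/-- The relative Green relation `ℒ^T`. -/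
def LrelT (T : Subsemigroup S) (u v : S) : Prop := lset T u = lset T v

/-- The relative Green relation `ℋ^T = ℛ^T ∩ ℒ^T`. -/
def HrelT (T : Subsemigroup S) (u v : S) : Prop := RrelT T u v ∧ LrelT T u v

/-- `H` is an `ℋ^T`-class of `S`. -/
def IsHClassIn (T : Subsemigroup S) (H : Set S) : Prop := ∃ a : S, H = {x | HrelT T a x}

/-- `T` has finite Green index in `S`: the complement `S \ T` is a union of finitely many
`ℋ^T`-classes. -/
def FiniteGreenIndex (T : Subsemigroup S) : Prop :=
  ∃ F : Finset S, (∀ c ∈ F, c ∉ T) ∧ ∀ s : S, s ∉ T → ∃ c ∈ F, HrelT T s c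

/-- The subset `T¹ = T ∪ {1}` of `S¹ = WithOne S`. -/
def T1 (T : Subsemigroup S) : Set (WithOne S) := insert 1 ((↑) '' (T : Set S))

/-- The subset `H·t` of `S¹`, for `H ⊆ S` and `t ∈ S¹`. -/
def setMulR (H : Set S) (t : WithOne S) : Set (WithOne S) :=
  {x | ∃ h ∈ H, x = (h : WithOne S) * t}

/-- The stabilizer `Stab(H) = {t ∈ T¹ : Ht = H}`, as a subset of `S¹`. -/
def stabSet (T : Subsemigroup S) (H : Set S) : Set (WithOne S) :=
  {t | t ∈ T1 T ∧ setMulR H t = (↑) '' H}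

theorem one_mem_stabSet (T : Subsemigroup S) (H : Set S) : (1 : WithOne S) ∈ stabSet T H := by
  refine ⟨Set.mem_insert _ _, ?_⟩
  ext x
  constructor
  · rintro ⟨h, hh, rfl⟩
    exact ⟨h, hh, (mul_one _).symm⟩
  · rintro ⟨h, hh, rfl⟩
    exact ⟨h, hh, (mul_one _).symm⟩

theorem mul_mem_stabSet {T : Subsemigroup S} {H : Set S} {s t : WithOne S}
    (hs : s ∈ stabSet T H) (ht : t ∈ stabSet T H) : s * t ∈ stabSet T H := by
  obtain ⟨hsT, hsH⟩ := hs
  obtain ⟨htT, htH⟩ := ht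
  constructor
  · rcases hsT with rfl | ⟨s', hs', rfl⟩
    · rwa [one_mul]
    · rcases htT with rfl | ⟨t', ht', rfl⟩
      · rw [mul_one]; exact Or.inr ⟨s', hs', rfl⟩
      · exact Or.inr ⟨s' * t', T.mul_mem hs' ht', rfl⟩
  · ext x
    constructor
    · rintro ⟨h, hh, rfl⟩
      have h1 : (h : WithOne S) * s ∈ setMulR H s := ⟨h, hh, rfl⟩
      rw [hsH] at h1
      obtain ⟨g, hg, hgs⟩ := h1
      have h2 : (g : WithOne S) * t ∈ setMulR H t := ⟨g, hg, rfl⟩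
      rw [htH] at h2
      obtain ⟨k, hk, hkt⟩ := h2
      refine ⟨k, hk, ?_⟩
      rw [hkt, hgs, ← mul_assoc]
    · rintro ⟨k, hk, rfl⟩
      have h2 : ((k : WithOne S)) ∈ setMulR H t := by
        rw [htH]; exact ⟨k, hk, rfl⟩
      obtain ⟨g, hg, hgt⟩ := h2
      have h1 : ((g : WithOne S)) ∈ setMulR H s := by
        rw [hsH]; exact ⟨g, hg, rfl⟩
      obtain ⟨h, hh, hhs⟩ := h1
      exact ⟨h, hh, by rw [hgt, hhs, mul_assoc]⟩

/-- The stabilizer `Stab(H)` as a submonoid of `S¹`. -/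
def stabSubmonoid (T : Subsemigroup S) (H : Set S) : Submonoid (WithOne S) where
  carrier := stabSet T H
  one_mem' := one_mem_stabSet T H
  mul_mem' := mul_mem_stabSet

/-- The Schützenberger congruence `γ(H)` on `Stab(H)`. -/
def gammaCon (T : Subsemigroup S) (H : Set S) : Con (stabSubmonoid T H) where
  r x y := ∀ h ∈ H, (h : WithOne S) * (x : WithOne S) = (h : WithOne S) * (y : WithOne S)
  iseqv := ⟨fun _ _ _ => rfl, fun hxy h hh => (hxy h hh).symm,
    fun h1 h2 h hh => (h1 h hh).trans (h2 h hh)⟩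
  mul' := by
    rintro ⟨w, hwT, hwH⟩ ⟨x, hxT, hxH⟩ ⟨y, hyT, hyH⟩ ⟨z, hzT, hzH⟩ hwx hyz h hh
    have h1 : (h : WithOne S) * w ∈ setMulR H w := ⟨h, hh, rfl⟩
    rw [hwH] at h1
    obtain ⟨g, hg, hgw⟩ := h1
    have key : (h : WithOne S) * (w * y) = (h : WithOne S) * (x * z) := by
      calc (h : WithOne S) * (w * y) = ((h : WithOne S) * w) * y := by rw [mul_assoc]
        _ = (g : WithOne S) * y := by rw [hgw]
        _ = (g : WithOne S) * z := hyz g hg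
        _ = ((h : WithOne S) * w) * z := by rw [hgw]
        _ = ((h : WithOne S) * x) * z := by rw [hwx h hh]
        _ = (h : WithOne S) * (x * z) := by rw [mul_assoc]
    exact key

/-- The relative Schützenberger group `Γ(H) = Stab(H)/γ(H)`. -/
abbrev SchGroup (T : Subsemigroup S) (H : Set S) := (gammaCon T H).Quotient

/-- Representatives `h_i` for `i ∈ I¹ = I ∪ {1}`, with `h_1 = 1 ∈ S¹`. -/
def repOne {ι : Type*} (h : ι → S) : Option ι → WithOne S :=
  fun o => o.elim 1 fun i => (h i : WithOne S)

/-- `S` is finitely presented as a semigroup. -/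
def SemigroupFP (S : Type*) [Semigroup S] : Prop :=
  ∃ (n : ℕ) (π : FreeSemigroup (Fin n) →ₙ* S), Function.Surjective π ∧
    ∃ R : Finset (FreeSemigroup (Fin n) × FreeSemigroup (Fin n)),
      ∀ u v, (conGen fun x y => (x, y) ∈ R) u v ↔ π u = π v

/-- `M` is finitely presented as a monoid. -/
def MonoidFP (M : Type*) [Monoid M] : Prop :=
  ∃ (n : ℕ) (π : FreeMonoid (Fin n) →* M), Function.Surjective π ∧
    ∃ R : Finset (FreeMonoid (Fin n) × FreeMonoid (Fin n)),
      ∀ u v, (conGen fun x y => (x, y) ∈ R) u v ↔ π u = π v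

/-- A left ideal of a semigroup. -/
def IsLeftIdeal (L : Set S) : Prop := L.Nonempty ∧ ∀ s : S, ∀ x ∈ L, s * x ∈ L

/-- A right ideal of a semigroup. -/
def IsRightIdeal (R : Set S) : Prop := R.Nonempty ∧ ∀ s : S, ∀ x ∈ R, x * s ∈ R

/-- Residual finiteness: distinct elements can be separated by a homomorphism
into a finite semigroup. -/
def ResiduallyFiniteMul (M : Type*) [Mul M] : Prop :=
  ∀ x y : M, x ≠ y → ∃ (F : Type) (_ : Semigroup F) (_ : Finite F) (φ : M →ₙ* F), φ x ≠ φ y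

/-- `T` has finite Green index inside the subsemigroup `Ssub` of the ambient semigroup:
`Ssub \ T` is a union of finitely many `ℋ^T`-classes. -/
def FiniteGreenIndexIn (Ssub T : Subsemigroup S) : Prop :=
  ∃ F : Finset S, (∀ c ∈ F, c ∈ Ssub ∧ c ∉ T) ∧ ∀ s ∈ Ssub, s ∉ T → ∃ c ∈ F, HrelT T s c

/-- A subsemigroup is a group under the induced operation. -/
def IsGroupSub (T : Subsemigroup S) : Prop :=
  ∃ e ∈ T, (∀ t ∈ T, e * t = t ∧ t * e = t) ∧ ∀ t ∈ T, ∃ t' ∈ T, t * t' = e ∧ t' * t = e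

/-- The (out-)ball of radius `n`: elements expressible as a product of at most `n`
(and at least one) elements of `A`. -/
def ball (A : Finset S) (n : ℕ) : Set S :=
  {s | ∃ l : List S, l ≠ [] ∧ l.length ≤ n ∧ (∀ x ∈ l, x ∈ A) ∧
    (l.map ((↑) : S → WithOne S)).prod = (s : WithOne S)}

/-- The growth function of a semigroup with respect to a finite set `A`. -/
noncomputable def growth (A : Finset S) (n : ℕ) : ℕ := (ball A n).ncard

end GreenIndexPaper

open GreenIndexPaper

namespace GIP9Aux

variable {S : Type*} {ι : Type*} [Semigroup S]

theorem coe_injective : Function.Injective ((↑) : S → WithOne S) :=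
  fun _ _ hab => WithOne.coe_inj.mp hab

theorem mem_T1_iff {T : Subsemigroup S} {x : WithOne S} :
    x ∈ T1 T ↔ x = 1 ∨ ∃ t ∈ T, x = (t : WithOne S) := by
  constructor
  · rintro (rfl | ⟨t, ht, rfl⟩)
    · exact Or.inl rfl
    · exact Or.inr ⟨t, ht, rfl⟩
  · rintro (rfl | ⟨t, ht, rfl⟩)
    · exact Set.mem_insert _ _
    · exact Set.mem_insert_iff.mpr (Or.inr ⟨t, ht, rfl⟩)

theorem mem_T1_mul {T : Subsemigroup S} {a b : WithOne S} (ha : a ∈ T1 T) (hb : b ∈ T1 T) :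
    a * b ∈ T1 T := by
  rcases mem_T1_iff.mp ha with rfl | ⟨s, hs, rfl⟩
  · rwa [one_mul]
  · rcases mem_T1_iff.mp hb with rfl | ⟨t, ht, rfl⟩
    · rwa [mul_one]
    · exact mem_T1_iff.mpr (Or.inr ⟨s * t, T.mul_mem hs ht, (WithOne.coe_mul s t).symm⟩)

/-- `T¹ · v` as a subset of `S¹`. -/
def L1 (T : Subsemigroup S) (v : WithOne S) : Set (WithOne S) := {x | ∃ w ∈ T1 T, x = w * v}

theorem L1_coe (T : Subsemigroup S) (y : S) :
    L1 T (y : WithOne S) = ((↑) : S → WithOne S) '' lset T y := by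
  ext x
  constructor
  · rintro ⟨w, hw, rfl⟩
    rcases mem_T1_iff.mp hw with rfl | ⟨t, ht, rfl⟩
    · exact ⟨y, Set.mem_insert _ _, (one_mul _).symm⟩
    · exact ⟨t * y, Set.mem_insert_iff.mpr (Or.inr ⟨t, ht, rfl⟩), (WithOne.coe_mul t y).symm⟩
  · rintro ⟨z, hz, rfl⟩
    rcases Set.mem_insert_iff.mp hz with rfl | ⟨t, ht, rfl⟩
    · exact ⟨1, Set.mem_insert _ _, (one_mul _).symm⟩
    · exact ⟨(t : WithOne S), mem_T1_iff.mpr (Or.inr ⟨t, ht, rfl⟩), (WithOne.coe_mul t y).symm⟩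

theorem L1_eq_iff {T : Subsemigroup S} {y z : S} :
    L1 T (y : WithOne S) = L1 T (z : WithOne S) ↔ lset T y = lset T z := by
  rw [L1_coe, L1_coe]
  exact Set.image_eq_image coe_injective

theorem L1_mul_congr {T : Subsemigroup S} {v v' : WithOne S} (hvv : L1 T v = L1 T v')
    (s : WithOne S) : L1 T (v * s) = L1 T (v' * s) := by
  ext x
  constructor
  · rintro ⟨w, hw, rfl⟩
    have h1 : w * v ∈ L1 T v := ⟨w, hw, rfl⟩
    rw [hvv] at h1
    obtain ⟨w', hw', he⟩ := h1
    exact ⟨w', hw', by rw [← mul_assoc, he, mul_assoc]⟩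
  · rintro ⟨w, hw, rfl⟩
    have h1 : w * v' ∈ L1 T v' := ⟨w, hw, rfl⟩
    rw [← hvv] at h1
    obtain ⟨w', hw', he⟩ := h1
    exact ⟨w', hw', by rw [← mul_assoc, he, mul_assoc]⟩

theorem mem_lset_self (T : Subsemigroup S) (y : S) : y ∈ lset T y := Set.mem_insert _ _

theorem lset_subset_T {T : Subsemigroup S} {y : S} (hy : y ∈ T) : lset T y ⊆ (T : Set S) := by
  rintro x (rfl | ⟨t, ht, rfl⟩)
  · exact hy
  · exact T.mul_mem ht hy

/-- Right-to-left index machine. -/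
def idxR (ρ : WithOne S → Option ι → Option ι) : List S → Option ι
  | [] => none
  | a :: w => ρ (a : WithOne S) (idxR ρ w)

/-- List of σ-values produced by the right-to-left machine. -/
def sigL (ρ : WithOne S → Option ι → Option ι) (σ : WithOne S → Option ι → WithOne S) :
    List S → List (WithOne S)
  | [] => []
  | a :: w => σ (a : WithOne S) (idxR ρ w) :: sigL ρ σ w

/-- Left-to-right index machine. -/
def lamI (lam : Option ι → WithOne S → Option ι) : Option ι → List (WithOne S) → Option ι
  | j, [] => j
  | j, s :: L => lamI lam (lam j s) L

/-- List of τ-values produced by the left-to-right machine. -/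
def tauL (lam : Option ι → WithOne S → Option ι) (τ : Option ι → WithOne S → WithOne S) :
    Option ι → List (WithOne S) → List (WithOne S)
  | _, [] => []
  | j, s :: L => τ j s :: tauL lam τ (lam j s) L

theorem tel_rho {h : ι → S} {ρ : WithOne S → Option ι → Option ι}
    {σ : WithOne S → Option ι → WithOne S}
    (hρeq : ∀ s i, s * repOne h i = repOne h (ρ s i) * σ s i) :
    ∀ w : List S, (w.map ((↑) : S → WithOne S)).prod = repOne h (idxR ρ w) * (sigL ρ σ w).prod
  | [] => by simp [idxR, sigL, repOne]
  | a :: w => by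
    have IH := tel_rho hρeq w
    simp only [List.map_cons, List.prod_cons, idxR, sigL]
    calc (a : WithOne S) * (w.map ((↑) : S → WithOne S)).prod
        = (a : WithOne S) * (repOne h (idxR ρ w) * (sigL ρ σ w).prod) := by rw [IH]
      _ = ((a : WithOne S) * repOne h (idxR ρ w)) * (sigL ρ σ w).prod := by rw [mul_assoc]
      _ = (repOne h (ρ (a : WithOne S) (idxR ρ w)) * σ (a : WithOne S) (idxR ρ w)) *
            (sigL ρ σ w).prod := by rw [hρeq]
      _ = repOne h (ρ (a : WithOne S) (idxR ρ w)) *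
            (σ (a : WithOne S) (idxR ρ w) * (sigL ρ σ w).prod) := by rw [mul_assoc]

theorem tel_lam {h : ι → S} {lam : Option ι → WithOne S → Option ι}
    {τ : Option ι → WithOne S → WithOne S}
    (hlameq : ∀ i s, repOne h i * s = τ i s * repOne h (lam i s)) :
    ∀ (L : List (WithOne S)) (j : Option ι),
      repOne h j * L.prod = (tauL lam τ j L).prod * repOne h (lamI lam j L)
  | [], j => by simp [tauL, lamI]
  | s :: L, j => by
    have IH := tel_lam hlameq L (lam j s)
    simp only [List.prod_cons, tauL, lamI]
    calc repOne h j * (s * L.prod)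
        = (repOne h j * s) * L.prod := by rw [mul_assoc]
      _ = (τ j s * repOne h (lam j s)) * L.prod := by rw [hlameq]
      _ = τ j s * (repOne h (lam j s) * L.prod) := by rw [mul_assoc]
      _ = τ j s * ((tauL lam τ (lam j s) L).prod * repOne h (lamI lam (lam j s) L)) := by rw [IH]
      _ = (τ j s * (tauL lam τ (lam j s) L).prod) * repOne h (lamI lam (lam j s) L) := by
            rw [mul_assoc]

theorem sig_mem {ρ : WithOne S → Option ι → Option ι} {σ : WithOne S → Option ι → WithOne S} :
    ∀ w : List S, ∀ s ∈ sigL ρ σ w, ∃ (a : S) (j : Option ι), a ∈ w ∧ s = σ (a : WithOne S) j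
  | [] => by intro s hs; simp [sigL] at hs
  | a :: w => by
    intro s hs
    rcases List.mem_cons.mp hs with rfl | hs'
    · exact ⟨a, idxR ρ w, List.mem_cons_self, rfl⟩
    · obtain ⟨b, j, hb, rfl⟩ := sig_mem w s hs'
      exact ⟨b, j, List.mem_cons_of_mem a hb, rfl⟩

theorem tau_mem {lam : Option ι → WithOne S → Option ι} {τ : Option ι → WithOne S → WithOne S} :
    ∀ (L : List (WithOne S)) (j : Option ι), ∀ v ∈ tauL lam τ j L,
      ∃ (i : Option ι) (s : WithOne S), s ∈ L ∧ v = τ i s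
  | [], j => by intro v hv; simp [tauL] at hv
  | s :: L, j => by
    intro v hv
    rcases List.mem_cons.mp hv with rfl | hv'
    · exact ⟨j, s, List.mem_cons_self, rfl⟩
    · obtain ⟨i, t, ht, rfl⟩ := tau_mem L (lam j s) v hv'
      exact ⟨i, t, List.mem_cons_of_mem s ht, rfl⟩

/-- The state invariant of the left-to-right machine. -/
def StP (T : Subsemigroup S) (h : ι → S) : Option ι → WithOne S → Prop
  | none, x => x ∈ T1 T
  | some m, x => ∃ y : S, (y : WithOne S) = x ∧ y ∉ T ∧ lset T y = lset T (h m)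

theorem step_St {T : Subsemigroup S} {h : ι → S} (hrep : ∀ i, h i ∉ T)
    {lam : Option ι → WithOne S → Option ι} {τ : Option ι → WithOne S → WithOne S}
    (hlameq : ∀ i s, repOne h i * s = τ i s * repOne h (lam i s))
    (hlamnone : ∀ i s, lam i s = none → repOne h i * s ∈ T1 T)
    (hlamsome : ∀ i s j, lam i s = some j →
        ∃ x : S, (x : WithOne S) = repOne h i * s ∧ x ∉ T ∧ HrelT T x (h j))
    {j : Option ι} {x s : WithOne S} (hs : s ∈ T1 T) (hx : StP T h j x) :
    StP T h (lam j s) (x * s) := by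
  cases j with
  | none =>
    have hx' : x ∈ T1 T := hx
    cases hl : lam none s with
    | none => exact mem_T1_mul hx' hs
    | some p =>
      exfalso
      obtain ⟨z, hzeq, hzT, _⟩ := hlamsome none s p hl
      rw [show repOne h none = (1 : WithOne S) from rfl, one_mul] at hzeq
      rcases mem_T1_iff.mp hs with rfl | ⟨u, hu, rfl⟩
      · exact WithOne.coe_ne_one hzeq
      · exact hzT (WithOne.coe_inj.mp hzeq ▸ hu)
  | some m =>
    obtain ⟨y, hyx, hyT, hyl⟩ := hx
    have hL1 : L1 T x = L1 T ((h m : S) : WithOne S) := by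
      rw [← hyx]; exact L1_eq_iff.mpr hyl
    have hL1s : L1 T (x * s) = L1 T (((h m : S) : WithOne S) * s) := L1_mul_congr hL1 s
    obtain ⟨y', hy'⟩ : ∃ y' : S, (y' : WithOne S) = x * s := by
      rcases mem_T1_iff.mp hs with rfl | ⟨u, hu, rfl⟩
      · exact ⟨y, by rw [mul_one, hyx]⟩
      · exact ⟨y * u, by rw [WithOne.coe_mul, hyx]⟩
    have hrm : repOne h (some m) = ((h m : S) : WithOne S) := rfl
    cases hl : lam (some m) s with
    | some p =>
      obtain ⟨z, hzeq, _, _, hzl⟩ := hlamsome (some m) s p hl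
      rw [hrm] at hzeq
      have hL1y' : L1 T (y' : WithOne S) = L1 T ((h p : S) : WithOne S) := by
        rw [hy', hL1s, ← hzeq]
        exact L1_eq_iff.mpr hzl
      have hy'l : lset T y' = lset T (h p) := L1_eq_iff.mp hL1y'
      have hy'T : y' ∉ T := by
        intro hmem
        exact hrep p (lset_subset_T hmem (hy'l ▸ mem_lset_self T (h p)))
      exact ⟨y', hy', hy'T, hy'l⟩
    | none =>
      have hT1 : ((h m : S) : WithOne S) * s ∈ T1 T := by
        have := hlamnone (some m) s hl
        rwa [hrm] at this
      rcases mem_T1_iff.mp hT1 with heq | ⟨v, hv, hveq⟩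
      · exfalso
        rcases mem_T1_iff.mp hs with rfl | ⟨u, hu, rfl⟩
        · rw [mul_one] at heq; exact WithOne.coe_ne_one heq
        · rw [← WithOne.coe_mul] at heq; exact WithOne.coe_ne_one heq
      · have hL1v : L1 T (y' : WithOne S) = L1 T (v : WithOne S) := by
          rw [hy', hL1s, hveq]
        have hyv : lset T y' = lset T v := L1_eq_iff.mp hL1v
        have hy'T : y' ∈ T := lset_subset_T hv (hyv ▸ mem_lset_self T y')
        show x * s ∈ T1 T
        rw [← hy']
        exact mem_T1_iff.mpr (Or.inr ⟨y', hy'T, rfl⟩)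

theorem inv_run {T : Subsemigroup S} {h : ι → S} (hrep : ∀ i, h i ∉ T)
    {lam : Option ι → WithOne S → Option ι} {τ : Option ι → WithOne S → WithOne S}
    (hlameq : ∀ i s, repOne h i * s = τ i s * repOne h (lam i s))
    (hlamnone : ∀ i s, lam i s = none → repOne h i * s ∈ T1 T)
    (hlamsome : ∀ i s j, lam i s = some j →
        ∃ x : S, (x : WithOne S) = repOne h i * s ∧ x ∉ T ∧ HrelT T x (h j)) :
    ∀ (L : List (WithOne S)) (j : Option ι) (x : WithOne S), (∀ s ∈ L, s ∈ T1 T) →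
      StP T h j x → StP T h (lamI lam j L) (x * L.prod)
  | [], j, x, _, hx => by simpa [lamI] using hx
  | s :: L, j, x, hL, hx => by
    have h1 : StP T h (lam j s) (x * s) :=
      step_St hrep hlameq hlamnone hlamsome (hL s (List.mem_cons_self)) hx
    have h2 := inv_run hrep hlameq hlamnone hlamsome L (lam j s) (x * s)
      (fun t ht => hL t (List.mem_cons_of_mem s ht)) h1
    simpa [lamI, List.prod_cons, mul_assoc] using h2

theorem exists_word {A : Set S} (hA : Subsemigroup.closure A = ⊤) (t : S) :
    ∃ w : List S, (∀ a ∈ w, a ∈ A) ∧ (w.map ((↑) : S → WithOne S)).prod = (t : WithOne S) := by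
  let W : Subsemigroup S :=
    { carrier := {u : S | ∃ w : List S, (∀ a ∈ w, a ∈ A) ∧
        (w.map ((↑) : S → WithOne S)).prod = (u : WithOne S)}
      mul_mem' := by
        rintro x y ⟨w1, h1, e1⟩ ⟨w2, h2, e2⟩
        refine ⟨w1 ++ w2, ?_, ?_⟩
        · intro a ha
          rcases List.mem_append.mp ha with ha' | ha'
          · exact h1 a ha'
          · exact h2 a ha'
        · rw [List.map_append, List.prod_append, e1, e2, WithOne.coe_mul] }
  have hle : Subsemigroup.closure A ≤ W := Subsemigroup.closure_le.mpr
    (fun a ha => ⟨[a], by simpa using ha, by simp⟩)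
  rw [hA] at hle
  exact hle (Subsemigroup.mem_top t)

theorem prod_coe (P : Subsemigroup S) :
    ∀ V : List (WithOne S), (∀ v ∈ V, v = 1 ∨ ∃ b ∈ P, v = (b : WithOne S)) →
      V.prod = 1 ∨ ∃ y ∈ P, V.prod = (y : WithOne S)
  | [], _ => Or.inl rfl
  | v :: V, hV => by
    have IH := prod_coe P V (fun u hu => hV u (List.mem_cons_of_mem v hu))
    rcases hV v (List.mem_cons_self) with rfl | ⟨b, hb, rfl⟩
    · rw [List.prod_cons, one_mul]; exact IH
    · rcases IH with h1 | ⟨y, hy, he⟩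
      · rw [List.prod_cons, h1, mul_one]; exact Or.inr ⟨b, hb, rfl⟩
      · rw [List.prod_cons, he, ← WithOne.coe_mul]
        exact Or.inr ⟨b * y, P.mul_mem hb hy, rfl⟩

theorem aux_main {S : Type*} {ι : Type*} [Semigroup S] (T : Subsemigroup S) (A : Set S)
    (hA : Subsemigroup.closure A = ⊤)
    (h : ι → S) (hrep : ∀ i, h i ∉ T)
    (ρ : WithOne S → Option ι → Option ι) (σ : WithOne S → Option ι → WithOne S)
    (lam : Option ι → WithOne S → Option ι) (τ : Option ι → WithOne S → WithOne S)
    (hσT : ∀ s i, σ s i ∈ T1 T) (hτT : ∀ i s, τ i s ∈ T1 T)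
    (hρeq : ∀ s i, s * repOne h i = repOne h (ρ s i) * σ s i)
    (hlameq : ∀ i s, repOne h i * s = τ i s * repOne h (lam i s))
    (hlamnone : ∀ i s, lam i s = none → repOne h i * s ∈ T1 T)
    (hlamsome : ∀ i s j, lam i s = some j →
        ∃ x : S, (x : WithOne S) = repOne h i * s ∧ x ∉ T ∧ HrelT T x (h j)) :
    Subsemigroup.closure
        {x : S | x ∈ T ∧ ∃ (i j : Option ι) (a : S), a ∈ A ∧
          (x : WithOne S) = τ i (σ (a : WithOne S) j)} = T := by
  set B : Set S := {x : S | x ∈ T ∧ ∃ (i j : Option ι) (a : S), a ∈ A ∧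
    (x : WithOne S) = τ i (σ (a : WithOne S) j)} with hB
  refine le_antisymm (Subsemigroup.closure_le.mpr fun x hx => hx.1) ?_
  intro t ht
  obtain ⟨w, hwA, hwprod⟩ := exists_word hA t
  have tel1 : (t : WithOne S) = repOne h (idxR ρ w) * (sigL ρ σ w).prod := by
    rw [← hwprod]; exact tel_rho hρeq w
  have hsT1 : ∀ s ∈ sigL ρ σ w, s ∈ T1 T := by
    intro s hs
    obtain ⟨a, j, _, rfl⟩ := sig_mem w s hs
    exact hσT _ _
  have base : StP T h (idxR ρ w) (repOne h (idxR ρ w)) := by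
    cases hi : idxR ρ w with
    | none => exact mem_T1_iff.mpr (Or.inl rfl)
    | some m => exact ⟨h m, rfl, hrep m, rfl⟩
  have hst := inv_run hrep hlameq hlamnone hlamsome (sigL ρ σ w) (idxR ρ w)
    (repOne h (idxR ρ w)) hsT1 base
  rw [← tel1] at hst
  cases hJ : lamI lam (idxR ρ w) (sigL ρ σ w) with
  | some m =>
    rw [hJ] at hst
    obtain ⟨y, hy, hyT, _⟩ := hst
    exact absurd (WithOne.coe_inj.mp hy ▸ ht) hyT
  | none =>
    have tel2 : (t : WithOne S) = (tauL lam τ (idxR ρ w) (sigL ρ σ w)).prod := by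
      rw [tel1, tel_lam hlameq (sigL ρ σ w) (idxR ρ w), hJ,
        show repOne h (none : Option ι) = (1 : WithOne S) from rfl, mul_one]
    have hforms : ∀ v ∈ tauL lam τ (idxR ρ w) (sigL ρ σ w),
        v = 1 ∨ ∃ b ∈ Subsemigroup.closure B, v = (b : WithOne S) := by
      intro v hv
      obtain ⟨i, s, hsL, rfl⟩ := tau_mem (sigL ρ σ w) (idxR ρ w) v hv
      obtain ⟨a, j, haw, rfl⟩ := sig_mem w s hsL
      rcases mem_T1_iff.mp (hτT i (σ (a : WithOne S) j)) with h1 | ⟨b, hbT, hbeq⟩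
      · exact Or.inl h1
      · exact Or.inr ⟨b, Subsemigroup.subset_closure ⟨hbT, i, j, a, hwA a haw, hbeq.symm⟩, hbeq⟩
    rcases prod_coe (Subsemigroup.closure B) _ hforms with h1 | ⟨y, hy, he⟩
    · exact absurd (tel2.trans h1) WithOne.coe_ne_one
    · have : t = y := WithOne.coe_inj.mp (tel2.trans he)
      exact this ▸ hy

end GIP9Aux

/-- Schreier-type generators for a subsemigroup; in particular finite
generation passes from `S` to a subsemigroup of finite Green index. -/
theorem generators_for_subsemigroup
    {S : Type*} {ι : Type*} [Semigroup S] (T : Subsemigroup S) (A : Set S)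
    (hA : Subsemigroup.closure A = ⊤)
    (h : ι → S)
    (hrep : ∀ i, h i ∉ T)
    (hcover : ∀ s : S, s ∉ T → ∃ i, HrelT T s (h i))
    (hdistinct : ∀ i j, HrelT T (h i) (h j) → i = j)
    (ρ : WithOne S → Option ι → Option ι) (σ : WithOne S → Option ι → WithOne S)
    (lam : Option ι → WithOne S → Option ι) (τ : Option ι → WithOne S → WithOne S)
    (hσT : ∀ s i, σ s i ∈ T1 T) (hτT : ∀ i s, τ i s ∈ T1 T)
    (hρeq : ∀ s i, s * repOne h i = repOne h (ρ s i) * σ s i)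
    (hlameq : ∀ i s, repOne h i * s = τ i s * repOne h (lam i s))
    (hρnone : ∀ s i, ρ s i = none → s * repOne h i ∈ T1 T)
    (hρsome : ∀ s i j, ρ s i = some j →
        ∃ x : S, (x : WithOne S) = s * repOne h i ∧ x ∉ T ∧ HrelT T x (h j))
    (hlamnone : ∀ i s, lam i s = none → repOne h i * s ∈ T1 T)
    (hlamsome : ∀ i s j, lam i s = some j →
        ∃ x : S, (x : WithOne S) = repOne h i * s ∧ x ∉ T ∧ HrelT T x (h j)) :
    Subsemigroup.closure
        {x : S | x ∈ T ∧ ∃ (i j : Option ι) (a : S), a ∈ A ∧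
          (x : WithOne S) = τ i (σ (a : WithOne S) j)} = T ∧
    ((∃ A' : Finset S, Subsemigroup.closure (↑A' : Set S) = ⊤) → FiniteGreenIndex T →
      ∃ B' : Finset S, (↑B' : Set S) ⊆ (T : Set S) ∧
        Subsemigroup.closure (↑B' : Set S) = T) := by
  constructor
  · exact GIP9Aux.aux_main T A hA h hrep ρ σ lam τ hσT hτT hρeq hlameq hlamnone hlamsome
  · rintro ⟨A', hA'⟩ ⟨F, hF1, hF2⟩
    -- `ι` is finite, since the `h i` lie in distinct `ℋ^T`-classes covered by `F`.
    choose f hfF hfH using fun i => hF2 (h i) (hrep i)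
    have hfinj : Function.Injective (fun i => (⟨f i, hfF i⟩ : {c // c ∈ F})) := by
      intro i j hij
      have hfe : f i = f j := congrArg Subtype.val hij
      refine hdistinct i j ?_
      obtain ⟨hri, hli⟩ := hfH i
      obtain ⟨hrj, hlj⟩ := hfH j
      rw [hfe] at hri hli
      exact ⟨hri.trans hrj.symm, hli.trans hlj.symm⟩
    haveI : Finite ι := Finite.of_injective _ hfinj
    -- the candidate finite generating set
    set Vset : Set S := {x : S | x ∈ T ∧ ∃ (i j : Option ι) (a : S), a ∈ (↑A' : Set S) ∧
      (x : WithOne S) = τ i (σ (a : WithOne S) j)} with hVset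
    haveI := Fintype.ofFinite ι
    have hVfin : Vset.Finite := by
      have h1 : (Set.range (fun p : Option ι × Option ι × {a // a ∈ A'} =>
          τ p.1 (σ ((p.2.2 : S) : WithOne S) p.2.1))).Finite := Set.finite_range _
      have h2 : (((↑) : S → WithOne S) ⁻¹' (Set.range (fun p : Option ι × Option ι × {a // a ∈ A'} =>
          τ p.1 (σ ((p.2.2 : S) : WithOne S) p.2.1)))).Finite :=
        h1.preimage (Set.injOn_of_injective GIP9Aux.coe_injective)
      refine h2.subset ?_
      rintro x ⟨_, i, j, a, ha, he⟩
      exact ⟨(i, j, ⟨a, ha⟩), he.symm⟩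
    refine ⟨hVfin.toFinset, ?_, ?_⟩
    · intro x hx
      rw [Set.Finite.coe_toFinset] at hx
      exact hx.1
    · rw [Set.Finite.coe_toFinset]
      exact GIP9Aux.aux_main T (↑A' : Set S) hA' h hrep ρ σ lam τ hσT hτT hρeq hlameq
        hlamnone hlamsome
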